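/- Let q be an even positive integer, let N ∈ ℕ, and let M := binom(N+q−1, q). There exist a finite set Ω_M = {ξ^1,…,ξ^M} of M distinct points, equipped with the uniform probability measure μ assigning mass 1/M to each point, and an N-dimensional subspace X_N of real-valued functions on Ω_M, such that for every m < M there do not exist points η^1,…,η^m ∈ Ω_M and real weights λ_1,…,λ_m satisfying Σ_{ν=1}^m λ_ν |f(η^ν)|^q = ∫_{Ω_M} |f|^q dμ for all f ∈ X_N. -/

import Mathlib

open Finset

/-- Monomial functions of fixed total degree are "linearly independent":
if a linear combination vanishes identically, all coefficients vanish. -/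
private lemma aux_mono_indep {N q : ℕ} (c : (Fin N → ℕ) → ℝ)
    (h : ∀ x : Fin N → ℝ,
      ∑ k ∈ piAntidiag (univ : Finset (Fin N)) q, c k * ∏ i, x i ^ k i = 0) :
    ∀ k ∈ piAntidiag (univ : Finset (Fin N)) q, c k = 0 := by
  classical
  set D := piAntidiag (univ : Finset (Fin N)) q with hD
  set p : MvPolynomial (Fin N) ℝ :=
    ∑ k ∈ D, MvPolynomial.monomial (Finsupp.equivFunOnFinite.symm k) (c k) with hp
  have heval : ∀ x : Fin N → ℝ, MvPolynomial.eval x p = 0 := by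
    intro x
    rw [hp, map_sum, ← h x]
    refine Finset.sum_congr rfl fun k hk => ?_
    rw [MvPolynomial.eval_monomial]
    congr 1
    rw [Finsupp.prod_pow]
    simp
  have hp0 : p = 0 := by
    apply MvPolynomial.funext
    intro x; simpa using heval x
  intro k hk
  have hco := congrArg (MvPolynomial.coeff (Finsupp.equivFunOnFinite.symm k)) hp0
  rw [hp, MvPolynomial.coeff_sum] at hco
  simp only [MvPolynomial.coeff_monomial, MvPolynomial.coeff_zero] at hco
  rw [Finset.sum_eq_single k (fun b _ hbk => by
        rw [if_neg]
        exact fun hEq => hbk (Finsupp.equivFunOnFinite.symm.injective hEq))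
      (fun hk' => absurd hk hk')] at hco
  simpa using hco

/-- Multinomial expansion of a power of a sum of products. -/
private lemma aux_expand {N q : ℕ} (a x : Fin N → ℝ) :
    (∑ i, a i * x i) ^ q =
      ∑ k ∈ piAntidiag (univ : Finset (Fin N)) q,
        ((Nat.multinomial univ k : ℝ) * ∏ i, a i ^ k i) * ∏ i, x i ^ k i := by
  rw [Finset.sum_pow_eq_sum_piAntidiag]
  refine Finset.sum_congr rfl fun k _ => ?_
  rw [mul_assoc, ← Finset.prod_mul_distrib]
  simp [mul_pow]

private lemma aux_card (N q : ℕ) :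
    (piAntidiag (univ : Finset (Fin N)) q).card = (N + q - 1).choose q := by
  classical
  rw [← Finset.map_sym_eq_piAntidiag, Finset.card_map, Finset.sym_univ,
    Finset.card_univ, Sym.card_sym_eq_choose]
  simp

theorem exact_weighted_discretization_sharp
    (q N : ℕ) (hq0 : 0 < q) (hqe : Even q) (hN : 0 < N) :
    ∃ X : Submodule ℝ (Fin ((N + q - 1).choose q) → ℝ),
      Module.finrank ℝ X = N ∧
      ∀ m < (N + q - 1).choose q,
        ¬ ∃ (η : Fin m → Fin ((N + q - 1).choose q)) (lam : Fin m → ℝ),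
            ∀ f ∈ X,
              (∑ ν, lam ν * |f (η ν)| ^ q) =
                (1 / ((N + q - 1).choose q : ℝ)) * ∑ j, |f j| ^ q := by
  classical
  set M := (N + q - 1).choose q with hM
  have hM0 : 0 < M := Nat.choose_pos (by omega)
  set D := piAntidiag (univ : Finset (Fin N)) q with hD
  -- the "monomial evaluation" map
  set Ψ : (Fin N → ℝ) → (↥D → ℝ) := fun y k => ∏ i, y i ^ (k : Fin N → ℕ) i with hΨ
  -- Step 2: the range of Ψ spans everything
  have hspan : Submodule.span ℝ (Set.range Ψ) = ⊤ := by
    by_contra hne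
    obtain ⟨φ, hφ0, hφ⟩ := Submodule.exists_dual_map_eq_bot_of_lt_top
      (lt_top_iff_ne_top.mpr hne) inferInstance
    set c : ↥D → ℝ := fun k => φ (fun j => if k = j then 1 else 0) with hc
    have hrep : ∀ v : ↥D → ℝ, φ v = ∑ k, v k * c k := by
      intro v
      conv_lhs => rw [pi_eq_sum_univ v]
      rw [map_sum]
      simp [hc, smul_eq_mul]
    have hvan : ∀ y : Fin N → ℝ, φ (Ψ y) = 0 := by
      intro y
      have : φ (Ψ y) ∈ Submodule.map φ (Submodule.span ℝ (Set.range Ψ)) :=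
        Submodule.mem_map_of_mem (Submodule.subset_span ⟨y, rfl⟩)
      rw [hφ] at this
      simpa using this
    -- apply monomial independence
    set c' : (Fin N → ℕ) → ℝ := fun k => if h : k ∈ D then c ⟨k, h⟩ else 0 with hc'
    have hzero : ∀ k ∈ D, c' k = 0 := by
      apply aux_mono_indep
      intro y
      have := hvan y
      rw [hrep] at this
      rw [← this]
      rw [Finset.univ_eq_attach, ← Finset.sum_attach D (fun k => c' k * ∏ i, y i ^ k i)]
      refine Finset.sum_congr rfl fun k _ => ?_
      simp only [hc', dif_pos k.2, Subtype.coe_eta]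
      exact mul_comm _ _
    have : c = 0 := by
      funext k
      have h1 := hzero k.1 k.2
      simp only [hc', dif_pos k.2, Subtype.coe_eta] at h1
      simpa using h1
    apply hφ0
    apply LinearMap.ext
    intro v
    rw [hrep, this]
    simp
  -- extract a basis from the range of Ψ
  obtain ⟨s, hsub, hsp, hli⟩ := exists_linearIndependent ℝ (Set.range Ψ)
  rw [hspan] at hsp
  have hsfin : s.Finite := hli.setFinite
  haveI := hsfin.fintype
  have hB : Module.finrank ℝ (↥D → ℝ) = Fintype.card s := by
    have hBB : Module.Basis s ℝ (↥D → ℝ) := Module.Basis.mk hli (by rw [← hsp]; exact le_of_eq (by rw [Subtype.range_coe]))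
    exact Module.finrank_eq_card_basis hBB
  have hcards : Fintype.card s = M := by
    rw [← hB, Module.finrank_pi, Fintype.card_coe, hD, aux_card]
  -- enumerate the basis by Fin M and choose preimages under Ψ
  set e : Fin M ≃ s := (Fintype.equivFinOfCardEq hcards).symm with he
  have hx : ∀ j : Fin M, ∃ y : Fin N → ℝ, Ψ y = ((e j : s) : ↥D → ℝ) := fun j => hsub (e j).2
  set x : Fin M → (Fin N → ℝ) := fun j => (hx j).choose with hxdef
  have hΨx : ∀ j, Ψ (x j) = ((e j : s) : ↥D → ℝ) := fun j => (hx j).choose_spec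
  have hΨxeq : (fun j => Ψ (x j)) = (fun k : s => (k : ↥D → ℝ)) ∘ e := by
    funext j; exact hΨx j
  have hliX : LinearIndependent ℝ fun j => Ψ (x j) := by
    rw [hΨxeq]; exact hli.comp e e.injective
  have hspX : Submodule.span ℝ (Set.range fun j => Ψ (x j)) = ⊤ := by
    rw [hΨxeq, Set.range_comp, Equiv.range_eq_univ, Set.image_univ, Subtype.range_coe, hsp]
  -- the subspace X
  set L : (Fin N → ℝ) →ₗ[ℝ] (Fin M → ℝ) :=
    { toFun := fun a j => ∑ i, a i * x j i
      map_add' := by intro a b; funext j; simp [add_mul, Finset.sum_add_distrib]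
      map_smul' := by intro r a; funext j; simp [Finset.mul_sum, mul_assoc] } with hL
  -- key vanishing lemma: if ∑_j w_j ⟨a, x_j⟩^q = 0 for all a, then w = 0
  have hkey : ∀ w : Fin M → ℝ,
      (∀ a : Fin N → ℝ, ∑ j, w j * (∑ i, a i * x j i) ^ q = 0) → w = 0 := by
    intro w hw
    have hzero : ∀ k ∈ D, (Nat.multinomial univ k : ℝ) * (∑ j, w j * ∏ i, x j i ^ k i) = 0 := by
      apply aux_mono_indep
      intro a
      have := hw a
      calc ∑ k ∈ D, ((Nat.multinomial univ k : ℝ) * (∑ j, w j * ∏ i, x j i ^ k i)) * ∏ i, a i ^ k i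
          = ∑ k ∈ D, ∑ j, ((Nat.multinomial univ k : ℝ) * (w j * ∏ i, x j i ^ k i)) * ∏ i, a i ^ k i := by
            refine Finset.sum_congr rfl fun k _ => ?_
            rw [Finset.mul_sum, Finset.sum_mul]
        _ = ∑ j, ∑ k ∈ D, ((Nat.multinomial univ k : ℝ) * (w j * ∏ i, x j i ^ k i)) * ∏ i, a i ^ k i :=
            Finset.sum_comm
        _ = ∑ j, w j * (∑ i, a i * x j i) ^ q := by
            refine Finset.sum_congr rfl fun j _ => ?_
            rw [aux_expand, Finset.mul_sum]
            refine Finset.sum_congr rfl fun k _ => ?_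
            ring
        _ = 0 := this
    have hsum0 : ∀ k : ↥D, ∑ j, w j * Ψ (x j) k = 0 := by
      intro k
      have h1 := hzero k.1 k.2
      have h2 : (Nat.multinomial univ (k : Fin N → ℕ) : ℝ) ≠ 0 := by
        exact_mod_cast (Nat.multinomial_pos _ _).ne'
      have := mul_eq_zero.mp h1
      rcases this with h | h
      · exact absurd h h2
      · exact h
    have hvec : ∑ j, w j • Ψ (x j) = 0 := by
      funext k
      have : (∑ j, w j • Ψ (x j)) k = ∑ j, w j * Ψ (x j) k := by
        rw [Finset.sum_apply]; simp
      rw [this, hsum0 k]; rfl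
    funext j
    exact (Fintype.linearIndependent_iff.mp hliX w hvec) j
  -- injectivity of L
  have hinj : Function.Injective L := by
    rw [injective_iff_map_eq_zero]
    intro a ha
    -- the linear functional v ↦ ∑_k (multinomial k * ∏ a^k) * v k vanishes on all Ψ (x j)
    set φ₂ : (↥D → ℝ) →ₗ[ℝ] ℝ :=
      { toFun := fun v => ∑ k : ↥D, ((Nat.multinomial univ (k : Fin N → ℕ) : ℝ)
            * ∏ i, a i ^ (k : Fin N → ℕ) i) * v k
        map_add' := by intro u v; rw [← Finset.sum_add_distrib]; simp [mul_add]
        map_smul' := by intro r v; rw [Finset.smul_sum]; simp [mul_left_comm, smul_eq_mul] } with hφ₂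
    have hφ₂eval : ∀ y : Fin N → ℝ, φ₂ (Ψ y) = (∑ i, a i * y i) ^ q := by
      intro y
      rw [aux_expand]
      show ∑ k : ↥D, _ = _
      rw [Finset.univ_eq_attach,
        ← Finset.sum_attach D (fun k => ((Nat.multinomial univ k : ℝ) * ∏ i, a i ^ k i) * ∏ i, y i ^ k i)]
    have hφ₂x : ∀ j, φ₂ (Ψ (x j)) = 0 := by
      intro j
      rw [hφ₂eval]
      have hz : (∑ i, a i * x j i) = 0 := by
        have h1 := congrFun ha j
        simpa [hL] using h1
      simp [hz, zero_pow hq0.ne']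
    have hφ₂0 : ∀ v : ↥D → ℝ, φ₂ v = 0 := by
      intro v
      have hle : Submodule.span ℝ (Set.range fun j => Ψ (x j)) ≤ LinearMap.ker φ₂ := by
        rw [Submodule.span_le]
        rintro _ ⟨j, rfl⟩
        exact hφ₂x j
      rw [hspX] at hle
      exact hle (Submodule.mem_top)
    have := hφ₂0 (Ψ a)
    rw [hφ₂eval a] at this
    have hsq : (∑ i, a i * a i) = 0 := by
      have h2 : (0:ℝ) ≤ ∑ i, a i * a i := Finset.sum_nonneg fun i _ => mul_self_nonneg _
      exact pow_eq_zero_iff hq0.ne' |>.mp this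
    funext i
    have := (Finset.sum_eq_zero_iff_of_nonneg (fun i _ => mul_self_nonneg (a i))).mp hsq i (Finset.mem_univ i)
    exact mul_self_eq_zero.mp this
  refine ⟨LinearMap.range L, ?_, ?_⟩
  · rw [LinearMap.finrank_range_of_inj hinj, Module.finrank_fin_fun]
  · intro m hm
    rintro ⟨η, lam, hH⟩
    -- translate the hypothesis to all a
    have ha : ∀ a : Fin N → ℝ,
        ∑ ν, lam ν * (∑ i, a i * x (η ν) i) ^ q
          = (1 / (M:ℝ)) * ∑ j, (∑ i, a i * x j i) ^ q := by
      intro a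
      have := hH (L a) (LinearMap.mem_range_self L a)
      simpa [hqe.pow_abs, hL] using this
    set w : Fin M → ℝ := fun j => (∑ ν, if η ν = j then lam ν else 0) - 1 / (M:ℝ) with hwdef
    have hw0 : w = 0 := by
      apply hkey
      intro a
      have expand : ∑ j, w j * (∑ i, a i * x j i) ^ q
          = (∑ ν, lam ν * (∑ i, a i * x (η ν) i) ^ q)
            - (1 / (M:ℝ)) * ∑ j, (∑ i, a i * x j i) ^ q := by
        rw [hwdef]
        simp only [sub_mul, Finset.sum_sub_distrib]
        congr 1
        · simp only [Finset.sum_mul]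
          rw [Finset.sum_comm]
          refine Finset.sum_congr rfl fun ν _ => ?_
          simp only [ite_mul, zero_mul]
          simp [Finset.sum_ite_eq]
        · rw [Finset.mul_sum]
      rw [expand, ha a, sub_self]
    -- some point is missed
    have hns : ¬ Function.Surjective η := by
      intro hs
      have := Fintype.card_le_of_surjective η hs
      simp only [Fintype.card_fin] at this
      omega
    simp only [Function.Surjective, not_forall] at hns
    obtain ⟨j₀, hj₀⟩ := hns
    have hwj : w j₀ = -(1 / (M:ℝ)) := by
      have h0 : (∑ ν, if η ν = j₀ then lam ν else 0) = 0 := by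
        apply Finset.sum_eq_zero
        intro ν _
        exact if_neg (fun h => hj₀ ⟨ν, h⟩)
      show (∑ ν, if η ν = j₀ then lam ν else 0) - 1 / (M:ℝ) = -(1 / (M:ℝ))
      rw [h0]; ring
    have : w j₀ = 0 := by rw [hw0]; rfl
    rw [hwj] at this
    have hMne : (M:ℝ) ≠ 0 := Nat.cast_ne_zero.mpr hM0.ne'
    field_simp at this
    norm_num at this
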